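/- arXiv:2404.07111 — 4 statements merged into one kernel-verified Lean document; each statement's English description precedes it below -/
import Mathlib

section
/- Let F be a field and n a positive integer. Let J_n be the n×n matrix over F with (J_n)_{k,ℓ} = 1 if k+ℓ = n+1 and 0 otherwise, and let S be the 2n×2n block matrix [[0, −J_n],[J_n, 0]]. Then every matrix X ∈ M_{2n}(F) satisfying Xᵀ S X = S has det X = 1. In particular, every element of Sp_{2n}(F) automatically has determinant 1. -/
open Matrix

section Auxiliary

variable {F : Type*} [Field F] {n : ℕ}

/-- Auxiliary "chart" lemma: if `AᵀC = CᵀA` and `A, C` have trivial joint kernel, then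
there is a subset `I` of the rows such that mixing rows of `A` (off `I`) and rows of `C`
(on `I`) gives an injective map. -/
lemma chart_aux (A C : Matrix (Fin n) (Fin n) F) (h1 : Aᵀ * C = Cᵀ * A)
    (h2 : ∀ x, A *ᵥ x = 0 → C *ᵥ x = 0 → x = 0) :
    ∃ I : Finset (Fin n), ∀ x : Fin n → F,
      (∀ i, i ∉ I → (A *ᵥ x) i = 0) → (∀ i ∈ I, (C *ᵥ x) i = 0) → x = 0 := by
  classical
  set U : Submodule F (Fin n → F) := LinearMap.range A.mulVecLin with hU
  set e : Fin n → (Fin n → F) := fun i => Pi.single i 1 with he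
  set P : Finset (Fin n) → Prop := fun I => U ⊓ Submodule.span F (e '' I) = ⊥ with hP
  have h0 : P ∅ := by simp [hP]
  obtain ⟨I, hI, hImax⟩ := Set.Finite.exists_maximalFor id {I | P I} (Set.toFinite _) ⟨∅, h0⟩
  have htop : ∀ j, e j ∈ U ⊔ Submodule.span F (e '' I) := by
    intro j
    by_cases hj : j ∈ I
    · exact Submodule.mem_sup_right (Submodule.subset_span ⟨j, hj, rfl⟩)
    · have hnP : ¬ P (insert j I) := by
        intro hins
        have := hImax hins (by simp [Finset.subset_insert])
        simp only [id] at this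
        exact hj (this (Finset.mem_insert_self j I))
      obtain ⟨v, hv, hv0⟩ := Submodule.ne_bot_iff _ |>.mp hnP
      have hv2 : v ∈ Submodule.span F (insert (e j) (e '' I)) := by
        have : (e '' (insert j I : Finset (Fin n))) = insert (e j) (e '' I) := by
          simp [Finset.coe_insert, Set.image_insert_eq]
        rw [← this]; exact hv.2
      obtain ⟨c, z, hz, hvz⟩ := Submodule.mem_span_insert.mp hv2
      have hc : c ≠ 0 := by
        rintro rfl
        exact hv0 ((Submodule.eq_bot_iff _).mp hI _ (Submodule.mem_inf.mpr ⟨hv.1, by rwa [hvz, zero_smul, zero_add]⟩))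
      have : e j = c⁻¹ • (v - z) := by
        rw [hvz, add_sub_cancel_right, smul_smul, inv_mul_cancel₀ hc, one_smul]
      rw [this]
      exact Submodule.smul_mem _ _ (Submodule.sub_mem _
        (Submodule.mem_sup_left hv.1) (Submodule.mem_sup_right hz))
  refine ⟨I, fun x hAx hCx => ?_⟩
  have hAx0 : A *ᵥ x = 0 := by
    have hmem : A *ᵥ x ∈ U ⊓ Submodule.span F (e '' I) := by
      constructor
      · exact ⟨x, rfl⟩
      · have he1 : ∀ (w : Fin n → F) i, w i • e i = Pi.single i (w i) := by
          intro w i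
          rw [he]; simp only [← Pi.single_smul, smul_eq_mul, mul_one]
        have : A *ᵥ x = ∑ i ∈ I, (A *ᵥ x) i • e i := by
          simp_rw [he1]
          rw [Finset.sum_subset (Finset.subset_univ I)
            (fun i _ hi => by rw [hAx i hi, Pi.single_zero]), Finset.univ_sum_single]
        rw [this]
        exact Submodule.sum_mem _ fun i hi => Submodule.smul_mem _ _
          (Submodule.subset_span ⟨i, hi, rfl⟩)
    rw [hI] at hmem; exact hmem
  have hCx0 : C *ᵥ x = 0 := by
    set φ : (Fin n → F) →ₗ[F] F :=
      { toFun := fun v => (C *ᵥ x) ⬝ᵥ v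
        map_add' := fun a b => dotProduct_add _ a b
        map_smul' := fun c a => by simp [dotProduct_smul] } with hφ
    have hker : U ⊔ Submodule.span F (e '' I) ≤ LinearMap.ker φ := by
      apply sup_le
      · rintro _ ⟨y, rfl⟩
        simp only [LinearMap.mem_ker, hφ, LinearMap.coe_mk, AddHom.coe_mk, mulVecLin_apply]
        rw [dotProduct_mulVec, ← mulVec_transpose, mulVec_mulVec, h1, ← mulVec_mulVec,
          hAx0, mulVec_zero, zero_dotProduct]
      · rw [Submodule.span_le]
        rintro _ ⟨i, hi, rfl⟩
        simp only [SetLike.mem_coe, LinearMap.mem_ker, hφ, LinearMap.coe_mk, AddHom.coe_mk, he]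
        rw [dotProduct_single]
        simp [hCx i hi]
    funext j
    have := hker (htop j)
    simp only [LinearMap.mem_ker, hφ, LinearMap.coe_mk, AddHom.coe_mk, he] at this
    rw [dotProduct_single] at this
    simpa using this
  exact h2 x hAx0 hCx0

lemma sympl_blocks (A B C D : Matrix (Fin n) (Fin n) F)
    (h : (fromBlocks A B C D)ᵀ * (Matrix.J (Fin n) F) * (fromBlocks A B C D)
        = Matrix.J (Fin n) F) :
    Aᵀ * C = Cᵀ * A ∧ Aᵀ * D - Cᵀ * B = 1 := by
  rw [Matrix.J, fromBlocks_transpose, fromBlocks_multiply, fromBlocks_multiply] at h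
  have h11 := congrArg Matrix.toBlocks₁₁ h
  have h12 := congrArg Matrix.toBlocks₁₂ h
  simp only [Matrix.toBlocks_fromBlocks₁₁, Matrix.toBlocks_fromBlocks₁₂,
    Matrix.mul_zero, Matrix.mul_one, Matrix.mul_neg, Matrix.neg_mul,
    zero_add, add_zero, ← sub_eq_add_neg] at h11 h12
  constructor
  · rw [sub_eq_zero] at h11; exact h11.symm
  · have := congrArg Neg.neg h12
    rw [neg_sub, neg_neg] at this; exact this

-- a symplectic matrix with invertible top-left block has det 1
lemma det_eq_one_of_block (A B C D : Matrix (Fin n) (Fin n) F)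
    (h : (fromBlocks A B C D)ᵀ * (Matrix.J (Fin n) F) * (fromBlocks A B C D)
        = Matrix.J (Fin n) F)
    (hA : IsUnit A.det) : (fromBlocks A B C D).det = 1 := by
  obtain ⟨h1, h2⟩ := sympl_blocks A B C D h
  haveI : Invertible A := A.invertibleOfIsUnitDet hA
  rw [Matrix.det_fromBlocks₁₁]
  have key : Aᵀ * (D - C * ⅟A * B) = 1 := by
    have : Aᵀ * (C * ⅟A * B) = Cᵀ * B := by
      calc Aᵀ * (C * ⅟A * B) = (Aᵀ * C) * ⅟A * B := by
            simp only [Matrix.mul_assoc]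
          _ = (Cᵀ * A) * ⅟A * B := by rw [h1]
          _ = Cᵀ * B := by rw [Matrix.mul_assoc Cᵀ A (⅟A), mul_invOf_self,
            Matrix.mul_one]
    rw [Matrix.mul_sub, this, h2]
  calc A.det * (D - C * ⅟A * B).det = (Aᵀ * (D - C * ⅟A * B)).det := by
        rw [Matrix.det_mul, Matrix.det_transpose]
      _ = 1 := by rw [key, Matrix.det_one]

-- main lemma for the standard J
lemma det_eq_one_std (Y : Matrix (Fin n ⊕ Fin n) (Fin n ⊕ Fin n) F)
    (hY : Yᵀ * (Matrix.J (Fin n) F) * Y = Matrix.J (Fin n) F) : Y.det = 1 := by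
  classical
  have hYmem : Y ∈ Matrix.symplecticGroup (Fin n) F := SymplecticGroup.mem_iff'.mpr hY
  have hYdet : IsUnit Y.det := SymplecticGroup.symplectic_det hYmem
  set A := Y.toBlocks₁₁ with hA
  set B := Y.toBlocks₁₂ with hB
  set C := Y.toBlocks₂₁ with hC
  set D := Y.toBlocks₂₂ with hD
  have hYb : Y = fromBlocks A B C D := (Matrix.fromBlocks_toBlocks Y).symm
  obtain ⟨h1, _⟩ := sympl_blocks A B C D (by rw [← hYb]; exact hY)
  -- joint kernel trivial
  have hker : ∀ x, A *ᵥ x = 0 → C *ᵥ x = 0 → x = 0 := by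
    intro x hAx hCx
    have h0 : Y *ᵥ (Sum.elim x 0) = 0 := by
      rw [hYb, fromBlocks_mulVec]
      simp [hAx, hCx]
    have : Sum.elim x 0 = (0 : Fin n ⊕ Fin n → F) := by
      have := congrArg (fun v => Y⁻¹ *ᵥ v) h0
      simpa [Matrix.mulVec_mulVec, Matrix.nonsing_inv_mul Y hYdet] using this
    funext i
    exact congrFun this (Sum.inl i)
  obtain ⟨I, hI⟩ := chart_aux A C h1 hker
  set E : Matrix (Fin n) (Fin n) F := Matrix.diagonal (fun i => if i ∈ I then 1 else 0) with hE
  have hEE : E * E = E := by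
    rw [hE, Matrix.diagonal_mul_diagonal]
    exact congrArg Matrix.diagonal (funext fun i => by split_ifs <;> ring)
  have hEt : Eᵀ = E := Matrix.diagonal_transpose _
  set σ : Matrix (Fin n ⊕ Fin n) (Fin n ⊕ Fin n) F := fromBlocks (1 - E) (-E) E (1 - E) with hσ
  -- σ is symplectic
  have hσJ : σᵀ * (Matrix.J (Fin n) F) * σ = Matrix.J (Fin n) F := by
    rw [hσ, Matrix.J, fromBlocks_transpose, fromBlocks_multiply, fromBlocks_multiply]
    rw [transpose_sub, transpose_one, transpose_neg, hEt]
    rw [Matrix.fromBlocks_inj]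
    refine ⟨?_, ?_, ?_, ?_⟩ <;>
    · simp only [Matrix.sub_mul, Matrix.mul_sub, Matrix.one_mul, Matrix.mul_one,
        Matrix.zero_mul, Matrix.mul_zero, Matrix.neg_mul, Matrix.mul_neg,
        sub_zero, zero_sub, neg_neg, sub_self, neg_zero, Matrix.mul_add, Matrix.add_mul, zero_add, add_zero, hEE]
      try abel
  -- det σ = 1
  have hσdet : σ.det = 1 := by
    have hfac : σ = fromBlocks 1 (-E) 0 1 * (fromBlocks 1 0 E 1 * fromBlocks 1 (-E) 0 1) := by
      rw [fromBlocks_multiply, fromBlocks_multiply, hσ, Matrix.fromBlocks_inj]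
      refine ⟨?_, ?_, ?_, ?_⟩ <;>
      · simp only [Matrix.sub_mul, Matrix.mul_sub, Matrix.one_mul, Matrix.mul_one,
          Matrix.zero_mul, Matrix.mul_zero, Matrix.neg_mul, Matrix.mul_neg,
          sub_zero, zero_sub, neg_neg, sub_self, neg_zero, Matrix.mul_add, Matrix.add_mul, zero_add, add_zero, hEE]
        try abel
    rw [hfac, Matrix.det_mul, Matrix.det_mul, Matrix.det_fromBlocks_zero₂₁,
      Matrix.det_fromBlocks_zero₁₂]
    simp
  -- Z = σ Y is symplectic with invertible top-left block
  set Z := σ * Y with hZ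
  have hZJ : Zᵀ * (Matrix.J (Fin n) F) * Z = Matrix.J (Fin n) F := by
    rw [hZ, Matrix.transpose_mul]
    calc Yᵀ * σᵀ * Matrix.J (Fin n) F * (σ * Y)
        = Yᵀ * (σᵀ * Matrix.J (Fin n) F * σ) * Y := by simp only [Matrix.mul_assoc]
      _ = Matrix.J (Fin n) F := by rw [hσJ]; exact hY
  have hZb : Z = fromBlocks ((1-E) * A + (-E) * C) ((1-E) * B + (-E) * D)
      (E * A + (1-E) * C) (E * B + (1-E) * D) := by
    rw [hZ, hYb, hσ, fromBlocks_multiply]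
  -- top-left block of Z is invertible
  have hcoord : ∀ (w : Fin n → F) (i : Fin n), (((1-E) * A + (-E) * C) *ᵥ w) i
      = if i ∈ I then -((C *ᵥ w) i) else (A *ᵥ w) i := by
    intro w i
    rw [Matrix.add_mulVec, ← Matrix.mulVec_mulVec, ← Matrix.mulVec_mulVec]
    simp only [Pi.add_apply, Matrix.sub_mulVec, Matrix.neg_mulVec, Matrix.one_mulVec,
      Pi.sub_apply, Pi.neg_apply, hE, Matrix.mulVec_diagonal]
    split_ifs <;> ring
  have hdetA' : IsUnit ((1-E) * A + (-E) * C).det := by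
    rw [isUnit_iff_ne_zero]
    intro hdet0
    obtain ⟨v, hv0, hv⟩ := (Matrix.exists_mulVec_eq_zero_iff).mpr hdet0
    apply hv0
    apply hI v
    · intro i hiI
      have h0 : (((1-E) * A + (-E) * C) *ᵥ v) i = 0 := by rw [hv]; rfl
      have h := (hcoord v i).symm.trans h0
      rwa [if_neg hiI] at h
    · intro i hiI
      have h0 : (((1-E) * A + (-E) * C) *ᵥ v) i = 0 := by rw [hv]; rfl
      have h := (hcoord v i).symm.trans h0
      rw [if_pos hiI] at h
      exact neg_eq_zero.mp h
  have : Z.det = 1 := by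
    rw [hZb] at hZJ ⊢
    exact det_eq_one_of_block _ _ _ _ hZJ hdetA'
  rw [hZ, Matrix.det_mul, hσdet, one_mul] at this
  exact this

end Auxiliary

/-- For the symplectic form `S = [[0, -J_n],[J_n, 0]]` (with `J_n` the antidiagonal
matrix of ones), any matrix `X` with `Xᵀ S X = S` has determinant `1`. -/
theorem stmt_0 (F : Type*) [Field F] (n : ℕ) (hn : 0 < n)
    (J : Matrix (Fin n) (Fin n) F)
    (hJ : J = Matrix.of fun (k l : Fin n) => if (k : ℕ) + (l : ℕ) + 1 = n then 1 else 0)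
    (S : Matrix (Fin n ⊕ Fin n) (Fin n ⊕ Fin n) F)
    (hS : S = Matrix.fromBlocks 0 (-J) J 0)
    (X : Matrix (Fin n ⊕ Fin n) (Fin n ⊕ Fin n) F)
    (hX : Xᵀ * S * X = S) :
    X.det = 1 := by
  have hJt : Jᵀ = J := by
    ext k l
    rw [hJ]
    simp only [Matrix.transpose_apply, Matrix.of_apply]
    rw [Nat.add_comm (l : ℕ) (k : ℕ)]
  have hJJ : J * J = 1 := by
    ext k l
    rw [hJ]
    simp only [Matrix.mul_apply, Matrix.of_apply, Matrix.one_apply]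
    have hk := k.isLt
    have hl := l.isLt
    set j0 : Fin n := ⟨n - 1 - (k : ℕ), by omega⟩ with hj0
    have key : ∀ j : Fin n,
        (if (k : ℕ) + (j : ℕ) + 1 = n then (1:F) else 0) *
          (if (j : ℕ) + (l : ℕ) + 1 = n then (1:F) else 0)
        = if j = j0 then (if k = l then (1:F) else 0) else 0 := by
      intro j
      have hj := j.isLt
      by_cases h1 : (k : ℕ) + (j : ℕ) + 1 = n <;>
        by_cases h2 : (j : ℕ) + (l : ℕ) + 1 = n <;>
        simp only [h1, h2, if_true, if_false, one_mul, mul_zero, zero_mul, mul_one,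
          if_neg, Fin.ext_iff, hj0] <;>
        first
          | (rw [if_pos (by omega), if_pos (by omega)])
          | (rw [if_pos (by omega), if_neg (by omega)])
          | (rw [if_neg (by omega)])
          | rfl
    rw [Finset.sum_congr rfl (fun j _ => key j), Finset.sum_ite_eq' Finset.univ j0]
    simp
  set Q : Matrix (Fin n ⊕ Fin n) (Fin n ⊕ Fin n) F := fromBlocks 1 0 0 J with hQ
  have hQt : Qᵀ = Q := by
    rw [hQ, fromBlocks_transpose, transpose_one, transpose_zero, hJt]
  have hQQ : Q * Q = 1 := by
    rw [hQ, fromBlocks_multiply]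
    simp [hJJ, ← Matrix.fromBlocks_one]
  have hQMQ : Q * (Matrix.J (Fin n) F) * Q = S := by
    rw [hQ, hS, Matrix.J, fromBlocks_multiply, fromBlocks_multiply, Matrix.fromBlocks_inj]
    refine ⟨by simp, by simp, by simp, by simp⟩
  have hQSQ : Q * S * Q = Matrix.J (Fin n) F := by
    rw [← hQMQ]
    calc Q * (Q * Matrix.J (Fin n) F * Q) * Q
        = (Q * Q) * Matrix.J (Fin n) F * (Q * Q) := by
          simp only [Matrix.mul_assoc]
      _ = Matrix.J (Fin n) F := by rw [hQQ, Matrix.one_mul, Matrix.mul_one]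
  set Y : Matrix (Fin n ⊕ Fin n) (Fin n ⊕ Fin n) F := Q * X * Q with hYdef
  have hY : Yᵀ * (Matrix.J (Fin n) F) * Y = Matrix.J (Fin n) F := by
    rw [hYdef, Matrix.transpose_mul, Matrix.transpose_mul, hQt]
    calc Q * (Xᵀ * Q) * Matrix.J (Fin n) F * (Q * X * Q)
        = Q * (Xᵀ * (Q * Matrix.J (Fin n) F * Q) * X) * Q := by
          simp only [Matrix.mul_assoc]
      _ = Q * (Xᵀ * S * X) * Q := by rw [hQMQ]
      _ = Matrix.J (Fin n) F := by rw [hX, hQSQ]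
  have hdetY : Y.det = 1 := det_eq_one_std Y hY
  have hQ2 : Q.det * Q.det = 1 := by rw [← Matrix.det_mul, hQQ, Matrix.det_one]
  calc X.det = (Q.det * Q.det) * X.det * (Q.det * Q.det) := by rw [hQ2]; ring
    _ = Q.det * (Q.det * X.det * Q.det) * Q.det := by ring
    _ = Q.det * Y.det * Q.det := by rw [hYdef, Matrix.det_mul, Matrix.det_mul]
    _ = 1 := by rw [hdetY, mul_one, hQ2]
end

section
/- Let F be a field and n ≥ 1. Define an action of the group (F^×)ⁿ on the set (F^×)ⁿ by (a·k)_i = a_i a_{i+1}^{-1} k_i for 1 ≤ i ≤ n−1 and (a·k)_n = a_n² k_n. Then two tuples k, k' ∈ (F^×)ⁿ lie in the same orbit if and only if k'_n k_n^{-1} is a square in F^×. In particular, the orbit space is in bijection with F^×/(F^×)². -/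
/-- The torus action on Whittaker data for `Sp_{2n}(F)`:
`(a·k)_i = a_i a_{i+1}⁻¹ k_i` for `i < n-1` and `(a·k)_{n-1} = a_{n-1}² k_{n-1}`
(zero-based indexing). Two tuples lie in the same orbit iff the ratio of their
last coordinates is a square; so orbits are parameterized by `F^×/(F^×)²`. -/
theorem stmt_7 (F : Type*) [Field F] (n : ℕ) (hn : 0 < n)
    (act : (Fin n → Fˣ) → (Fin n → Fˣ) → (Fin n → Fˣ))
    (hact : ∀ (a k : Fin n → Fˣ) (i : Fin n), act a k i =
      if h : (i : ℕ) + 1 < n then a i * (a ⟨(i : ℕ) + 1, h⟩)⁻¹ * k i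
      else (a i) ^ 2 * k i)
    (k k' : Fin n → Fˣ) :
    (∃ a : Fin n → Fˣ, act a k = k') ↔
      ∃ c : Fˣ, k' ⟨n - 1, by omega⟩ * (k ⟨n - 1, by omega⟩)⁻¹ = c ^ 2 := by
  constructor
  · rintro ⟨a, ha⟩
    refine ⟨a ⟨n - 1, by omega⟩, ?_⟩
    have := hact a k ⟨n - 1, by omega⟩
    rw [ha] at this
    rw [dif_neg (by simp; omega)] at this
    rw [this]
    group
  · rintro ⟨c, hc⟩
    -- r j : the ratio k'_j / k_j (as a function of ℕ)
    set r : ℕ → Fˣ := fun j => if h : j < n then k' ⟨j, h⟩ * (k ⟨j, h⟩)⁻¹ else 1 with hr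
    set g : ℕ → Fˣ := fun m => ∏ j ∈ Finset.Ico m (n - 1), r j with hg
    refine ⟨fun i => c * g i, ?_⟩
    funext i
    rw [hact]
    by_cases h : (i : ℕ) + 1 < n
    · rw [dif_pos h]
      have hsplit : g (i : ℕ) = r i * g ((i : ℕ) + 1) := by
        rw [hg]
        simp only
        rw [Finset.prod_eq_prod_Ico_succ_bot (by omega)]
      have hri : r (i : ℕ) = k' i * (k i)⁻¹ := by
        rw [hr]; simp only [dif_pos i.isLt]
      have : (c * g (i : ℕ)) * (c * g ((i : ℕ) + 1))⁻¹ * k i = k' i := by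
        rw [hsplit, hri, Units.ext_iff]
        push_cast
        field_simp
      simpa using this
    · rw [dif_neg h]
      have hi : (i : ℕ) = n - 1 := by omega
      have hgi : g (i : ℕ) = 1 := by
        rw [hg]; simp [hi]
      rw [hgi]
      have hk' : k' ⟨n - 1, by omega⟩ = k' i := by congr 1; exact Fin.ext hi.symm
      have hk : k ⟨n - 1, by omega⟩ = k i := by congr 1; exact Fin.ext hi.symm
      rw [hk', hk] at hc
      have : k' i = c ^ 2 * k i := by
        rw [← hc]; group
      rw [this]; group
end

section
/- Let F be a field and n ≥ 2. Define an action of the group (F^×)ⁿ on the set (F^×)ⁿ by (a·k)_i = a_i a_{i+1}^{-1} k_i for 1 ≤ i ≤ n−1 and (a·k)_n = a_{n−1} a_n k_n. Then two tuples k, k' ∈ (F^×)ⁿ lie in the same orbit if and only if (k_{n−1}^{-1} k_n)(k'_{n−1}^{-1} k'_n)^{-1} is a square in F^×. In particular, the orbit space is in bijection with F^×/(F^×)². -/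
private lemma stmt_9_aux {G : Type*} [CommGroup G] (c p a b : G) :
    c⁻¹ * (a * b⁻¹ * p) * (c⁻¹ * p)⁻¹ * b = a := by
  simp [mul_inv_rev, mul_comm, mul_left_comm, mul_assoc]

/-- The torus action on Whittaker data for split `SO_{2n}(F)` (`n ≥ 2`):
`(a·k)_i = a_i a_{i+1}⁻¹ k_i` for `i < n-1` and `(a·k)_{n-1} = a_{n-2} a_{n-1} k_{n-1}`
(zero-based indexing). Two tuples lie in the same orbit iff
`(k_{n-2}⁻¹ k_{n-1})·(k'_{n-2}⁻¹ k'_{n-1})⁻¹` is a square; so orbits are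
parameterized by `F^×/(F^×)²`. -/
theorem stmt_9 (F : Type*) [Field F] (n : ℕ) (hn : 2 ≤ n)
    (act : (Fin n → Fˣ) → (Fin n → Fˣ) → (Fin n → Fˣ))
    (hact : ∀ (a k : Fin n → Fˣ) (i : Fin n), act a k i =
      if h : (i : ℕ) + 1 < n then a i * (a ⟨(i : ℕ) + 1, h⟩)⁻¹ * k i
      else a ⟨n - 2, by omega⟩ * a i * k i)
    (k k' : Fin n → Fˣ) :
    (∃ a : Fin n → Fˣ, act a k = k') ↔
      ∃ c : Fˣ, ((k ⟨n - 2, by omega⟩)⁻¹ * k ⟨n - 1, by omega⟩) *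
        ((k' ⟨n - 2, by omega⟩)⁻¹ * k' ⟨n - 1, by omega⟩)⁻¹ = c ^ 2 := by
  have hn1 : n - 1 < n := by omega
  have hn2 : n - 2 < n := by omega
  constructor
  · rintro ⟨a, ha⟩
    refine ⟨(a ⟨n - 1, hn1⟩)⁻¹, ?_⟩
    have e2 := hact a k ⟨n - 2, hn2⟩
    have e1 := hact a k ⟨n - 1, hn1⟩
    rw [ha] at e1 e2
    rw [dif_pos (show ((⟨n - 2, hn2⟩ : Fin n) : ℕ) + 1 < n by simp; omega)] at e2
    rw [dif_neg (show ¬ (((⟨n - 1, hn1⟩ : Fin n) : ℕ) + 1 < n) by simp; omega)] at e1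
    have hfin : ∀ p, (⟨((⟨n - 2, hn2⟩ : Fin n) : ℕ) + 1, p⟩ : Fin n) = ⟨n - 1, hn1⟩ := by
      intro p; apply Fin.ext; simp; omega
    rw [hfin] at e2
    have e1' : k' ⟨n - 1, hn1⟩ = a ⟨n - 2, hn2⟩ * a ⟨n - 1, hn1⟩ * k ⟨n - 1, hn1⟩ := e1
    show ((k ⟨n - 2, hn2⟩)⁻¹ * k ⟨n - 1, hn1⟩) *
        ((k' ⟨n - 2, hn2⟩)⁻¹ * k' ⟨n - 1, hn1⟩)⁻¹ = ((a ⟨n - 1, hn1⟩)⁻¹) ^ 2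
    rw [e1', e2, pow_two]
    simp [mul_inv_rev, mul_comm, mul_left_comm, mul_assoc]
  · rintro ⟨c, hc⟩
    set g : ℕ → Fˣ := fun j => if h : j < n then k' ⟨j, h⟩ * (k ⟨j, h⟩)⁻¹ else 1 with hg
    refine ⟨fun i => c⁻¹ * ∏ j ∈ Finset.Ico (i : ℕ) (n - 1), g j, ?_⟩
    funext i
    rw [hact]
    split_ifs with h
    · have hi : (i : ℕ) < n - 1 := by omega
      simp only
      rw [Finset.prod_eq_prod_Ico_succ_bot hi]
      have hgi : g (i : ℕ) = k' i * (k i)⁻¹ := by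
        simp [hg, i.isLt]
      rw [hgi]
      generalize (∏ j ∈ Finset.Ico ((i : ℕ) + 1) (n - 1), g j) = P
      exact stmt_9_aux c P (k' i) (k i)
    · have hi : i = ⟨n - 1, hn1⟩ := by
        apply Fin.ext; have := i.isLt; simp; omega
      subst hi
      simp only
      have h1 : Finset.Ico (n - 1) (n - 1) = ∅ := Finset.Ico_self _
      have h2 : Finset.Ico (n - 2) (n - 1) = {n - 2} := by
        rw [show n - 1 = (n - 2) + 1 by omega]
        exact Nat.Ico_succ_singleton _
      rw [h1, h2, Finset.prod_empty, Finset.prod_singleton]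
      have hg2 : g (n - 2) = k' ⟨n - 2, hn2⟩ * (k ⟨n - 2, hn2⟩)⁻¹ := by
        simp [hg, hn2]
      rw [hg2]
      have hc' : ((k ⟨n - 2, hn2⟩)⁻¹ * k ⟨n - 1, hn1⟩) *
          ((k' ⟨n - 2, hn2⟩)⁻¹ * k' ⟨n - 1, hn1⟩)⁻¹ = c ^ 2 := hc
      show c⁻¹ * (k' ⟨n - 2, hn2⟩ * (k ⟨n - 2, hn2⟩)⁻¹) * (c⁻¹ * 1) * k ⟨n - 1, hn1⟩
          = k' ⟨n - 1, hn1⟩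
      rw [Units.ext_iff] at hc' ⊢
      simp only [Units.val_mul, Units.val_pow_eq_pow_val, Units.val_inv_eq_inv_val,
        Units.val_one, mul_one] at hc' ⊢
      field_simp at hc' ⊢
      linear_combination hc'
end

section
/- Let k and ℓ be positive integers, and let a_1,…,a_k, b_1,…,b_k and a'_1,…,a'_ℓ, b'_1,…,b'_ℓ be integers satisfying 0 ≤ a_1 < b_1 < a_2 < b_2 < ⋯ < a_k < b_k and 0 ≤ a'_1 < b'_1 < ⋯ < a'_ℓ < b'_ℓ. For x ∈ ℤ define m(x) = #{i : −a_i ≤ x ≤ b_i} + #{i : −a_i ≤ −x ≤ b_i}, and define m'(x) analogously from the primed data. If m(x) = m'(x) for every x ∈ ℤ, then k = ℓ and a_i = a'_i, b_i = b'_i for all 1 ≤ i ≤ k. -/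
open Finset

lemma seg_card_tail (k c : ℕ) :
    (Finset.univ.filter fun i : Fin k => c ≤ (i : ℕ)).card = k - c := by
  rcases lt_or_ge c k with h | h
  · have : (Finset.univ.filter fun i : Fin k => c ≤ (i : ℕ)) = Finset.Ici ⟨c, h⟩ := by
      ext i; simp [Fin.le_def]
    rw [this, Fin.card_Ici]
  · have : (Finset.univ.filter fun i : Fin k => c ≤ (i : ℕ)) = ∅ := by
      ext i; simp; omega
    rw [this]; simp; omega

/-- strict interleaving gives `b i < a j` for `i < j`. -/
lemma seg_bma {k : ℕ} {a b : Fin k → ℤ}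
    (hab : ∀ i : Fin k, a i < b i)
    (hba : ∀ (i : Fin k) (h : (i : ℕ) + 1 < k), b i < a ⟨(i : ℕ) + 1, h⟩) :
    ∀ (i j : ℕ) (hi : i < k) (hj : j < k), i < j → b ⟨i, hi⟩ < a ⟨j, hj⟩ := by
  intro i j
  induction j with
  | zero => omega
  | succ n ih =>
    intro hi hj hij
    have hn : n < k := by omega
    rcases Nat.lt_or_ge i n with h | h
    · have h1 := ih hi hn h
      have h2 := hab ⟨n, hn⟩
      have h3 := hba ⟨n, hn⟩ hj
      exact h1.trans (h2.trans h3)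
    · have : i = n := by omega
      subst this
      exact hba ⟨i, hn⟩ hj

lemma seg_lower {k : ℕ} (p : Fin k → Prop) [DecidablePred p] (c : ℕ)
    (h : ∀ i : Fin k, c ≤ (i : ℕ) → p i) :
    k - c ≤ (Finset.univ.filter p).card := by
  calc k - c = (Finset.univ.filter fun i : Fin k => c ≤ (i : ℕ)).card :=
        (seg_card_tail k c).symm
    _ ≤ _ := Finset.card_le_card (by intro i hi; simp at hi ⊢; exact h i hi)

lemma seg_upper {k : ℕ} (p : Fin k → Prop) [DecidablePred p] (c : ℕ)
    (h : ∀ i : Fin k, p i → c ≤ (i : ℕ)) :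
    (Finset.univ.filter p).card ≤ k - c := by
  calc (Finset.univ.filter p).card
      ≤ (Finset.univ.filter fun i : Fin k => c ≤ (i : ℕ)).card :=
        Finset.card_le_card (by intro i hi; simp at hi ⊢; exact h i hi)
    _ = k - c := seg_card_tail k c

lemma seg_key {k : ℕ} {a b : Fin k → ℤ} (ha : ∀ i, 0 ≤ a i) (hab : ∀ i, a i < b i)
    (hmono : ∀ i j : Fin k, (i : ℕ) < (j : ℕ) → b i < a j)
    (x : ℤ) (hx : 0 ≤ x) (j : ℕ) (hj : j < k) :
    (x ≤ b ⟨j, hj⟩ ↔ 2 * (k - j) - 1 ≤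
        (Finset.univ.filter fun i : Fin k => -a i ≤ x ∧ x ≤ b i).card
        + (Finset.univ.filter fun i : Fin k => -a i ≤ -x ∧ -x ≤ b i).card) ∧
    (x ≤ a ⟨j, hj⟩ ↔ 2 * (k - j) ≤
        (Finset.univ.filter fun i : Fin k => -a i ≤ x ∧ x ≤ b i).card
        + (Finset.univ.filter fun i : Fin k => -a i ≤ -x ∧ -x ≤ b i).card) := by
  have hb0 : ∀ i, 0 ≤ b i := fun i => (ha i).trans (hab i).le
  have e1 : (Finset.univ.filter fun i : Fin k => -a i ≤ x ∧ x ≤ b i)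
      = Finset.univ.filter fun i : Fin k => x ≤ b i := by
    apply Finset.filter_congr
    intro i _
    constructor
    · exact fun h => h.2
    · exact fun h => ⟨(neg_nonpos.mpr (ha i)).trans hx, h⟩
  have e2 : (Finset.univ.filter fun i : Fin k => -a i ≤ -x ∧ -x ≤ b i)
      = Finset.univ.filter fun i : Fin k => x ≤ a i := by
    apply Finset.filter_congr
    intro i _
    constructor
    · exact fun h => neg_le_neg_iff.mp h.1
    · exact fun h => ⟨neg_le_neg h, (neg_nonpos.mpr hx).trans (hb0 i)⟩
  rw [e1, e2]
  set J : Fin k := ⟨j, hj⟩ with hJ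
  have hJval : (J : ℕ) = j := rfl
  have hbb : ∀ i i' : Fin k, (i : ℕ) ≤ (i' : ℕ) → b i ≤ b i' := by
    intro i i' h
    rcases eq_or_lt_of_le h with h | h
    · rw [Fin.ext h]
    · exact ((hmono i i' h).trans (hab i')).le
  have haa : ∀ i i' : Fin k, (i : ℕ) ≤ (i' : ℕ) → a i ≤ a i' := by
    intro i i' h
    rcases eq_or_lt_of_le h with h | h
    · rw [Fin.ext h]
    · exact ((hab i).trans (hmono i i' h)).le
  constructor
  · constructor
    · intro hxb
      have L1 : k - j ≤ (Finset.univ.filter fun i : Fin k => x ≤ b i).card :=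
        seg_lower _ j fun i hi => hxb.trans (hbb J i hi)
      have L2 : k - (j + 1) ≤ (Finset.univ.filter fun i : Fin k => x ≤ a i).card :=
        seg_lower _ (j + 1) fun i hi =>
          hxb.trans (hmono J i (by omega)).le
      omega
    · intro h
      by_contra hxb
      push_neg at hxb
      have U1 : (Finset.univ.filter fun i : Fin k => x ≤ b i).card ≤ k - (j + 1) :=
        seg_upper _ (j + 1) (by
          intro i hi
          by_contra hc
          push_neg at hc
          exact absurd (hi.trans (hbb i J (by omega))) (not_le.mpr hxb))
      have U2 : (Finset.univ.filter fun i : Fin k => x ≤ a i).card ≤ k - (j + 1) :=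
        seg_upper _ (j + 1) (by
          intro i hi
          by_contra hc
          push_neg at hc
          exact absurd (hi.trans ((haa i J (by omega)).trans (hab J).le))
            (not_le.mpr hxb))
      omega
  · constructor
    · intro hxa
      have L3 : k - j ≤ (Finset.univ.filter fun i : Fin k => x ≤ a i).card :=
        seg_lower _ j fun i hi => hxa.trans (haa J i hi)
      have L4 : k - j ≤ (Finset.univ.filter fun i : Fin k => x ≤ b i).card :=
        seg_lower _ j fun i hi => hxa.trans ((haa J i hi).trans (hab i).le)
      omega
    · intro h
      by_contra hxa
      push_neg at hxa
      have U3 : (Finset.univ.filter fun i : Fin k => x ≤ a i).card ≤ k - (j + 1) :=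
        seg_upper _ (j + 1) (by
          intro i hi
          by_contra hc
          push_neg at hc
          exact absurd (hi.trans (haa i J (by omega))) (not_le.mpr hxa))
      have U4 : (Finset.univ.filter fun i : Fin k => x ≤ b i).card ≤ k - j :=
        seg_upper _ j (by
          intro i hi
          by_contra hc
          push_neg at hc
          exact absurd (hi.trans_lt (hmono i J (by omega))) (not_lt.mpr hxa.le))
      omega

/-- Uniqueness of interleaved segment data: if two families of segments
`[-a_i, b_i]` with `0 ≤ a_1 < b_1 < a_2 < b_2 < ⋯` yield the same counting
function `m(x) = #{i : -a_i ≤ x ≤ b_i} + #{i : -a_i ≤ -x ≤ b_i}` for all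
integers `x`, then the families coincide. -/
theorem stmt_17 (k l : ℕ) (hk : 0 < k) (hl : 0 < l)
    (a b : Fin k → ℤ) (a' b' : Fin l → ℤ)
    (ha0 : 0 ≤ a ⟨0, hk⟩) (ha'0 : 0 ≤ a' ⟨0, hl⟩)
    (hab : ∀ i : Fin k, a i < b i)
    (hba : ∀ (i : Fin k) (h : (i : ℕ) + 1 < k), b i < a ⟨(i : ℕ) + 1, h⟩)
    (hab' : ∀ i : Fin l, a' i < b' i)
    (hba' : ∀ (i : Fin l) (h : (i : ℕ) + 1 < l), b' i < a' ⟨(i : ℕ) + 1, h⟩)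
    (hm : ∀ x : ℤ,
      ((Finset.univ.filter fun i : Fin k => -a i ≤ x ∧ x ≤ b i).card
        + (Finset.univ.filter fun i : Fin k => -a i ≤ -x ∧ -x ≤ b i).card)
      = ((Finset.univ.filter fun i : Fin l => -a' i ≤ x ∧ x ≤ b' i).card
        + (Finset.univ.filter fun i : Fin l => -a' i ≤ -x ∧ -x ≤ b' i).card)) :
    k = l ∧ ∀ (i : ℕ) (hik : i < k) (hil : i < l),
      a ⟨i, hik⟩ = a' ⟨i, hil⟩ ∧ b ⟨i, hik⟩ = b' ⟨i, hil⟩ := by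
  have hm1 : ∀ i j : Fin k, (i : ℕ) < (j : ℕ) → b i < a j :=
    fun i j h => seg_bma hab hba i.val j.val i.isLt j.isLt h
  have hm2 : ∀ i j : Fin l, (i : ℕ) < (j : ℕ) → b' i < a' j :=
    fun i j h => seg_bma hab' hba' i.val j.val i.isLt j.isLt h
  have ha_all : ∀ i : Fin k, 0 ≤ a i := by
    intro i
    rcases Nat.eq_zero_or_pos i.val with h | h
    · have : i = ⟨0, hk⟩ := Fin.ext h
      rw [this]; exact ha0
    · exact ha0.trans ((hab ⟨0, hk⟩).trans (hm1 ⟨0, hk⟩ i h)).le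
  have ha'_all : ∀ i : Fin l, 0 ≤ a' i := by
    intro i
    rcases Nat.eq_zero_or_pos i.val with h | h
    · have : i = ⟨0, hl⟩ := Fin.ext h
      rw [this]; exact ha'0
    · exact ha'0.trans ((hab' ⟨0, hl⟩).trans (hm2 ⟨0, hl⟩ i h)).le
  have hkl : k = l := by
    have h0 := hm 0
    simp only [neg_zero] at h0
    have c1 : (Finset.univ.filter fun i : Fin k => -a i ≤ (0 : ℤ) ∧ (0 : ℤ) ≤ b i)
        = Finset.univ := by
      apply Finset.filter_true_of_mem
      intro i _
      exact ⟨neg_nonpos.mpr (ha_all i), (ha_all i).trans (hab i).le⟩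
    have c2 : (Finset.univ.filter fun i : Fin l => -a' i ≤ (0 : ℤ) ∧ (0 : ℤ) ≤ b' i)
        = Finset.univ := by
      apply Finset.filter_true_of_mem
      intro i _
      exact ⟨neg_nonpos.mpr (ha'_all i), (ha'_all i).trans (hab' i).le⟩
    rw [c1, c2] at h0
    simp only [Finset.card_univ, Fintype.card_fin] at h0
    omega
  subst hkl
  refine ⟨rfl, fun i hik hil => ?_⟩
  have K1 := fun (x : ℤ) (hx : 0 ≤ x) => seg_key ha_all hab hm1 x hx i hik
  have K2 := fun (x : ℤ) (hx : 0 ≤ x) => seg_key ha'_all hab' hm2 x hx i hil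
  constructor
  · apply le_antisymm
    · have h1 := (K1 (a ⟨i, hik⟩) (ha_all _)).2.mp le_rfl
      rw [hm (a ⟨i, hik⟩)] at h1
      exact (K2 (a ⟨i, hik⟩) (ha_all _)).2.mpr h1
    · have h1 := (K2 (a' ⟨i, hil⟩) (ha'_all _)).2.mp le_rfl
      rw [← hm (a' ⟨i, hil⟩)] at h1
      exact (K1 (a' ⟨i, hil⟩) (ha'_all _)).2.mpr h1
  · apply le_antisymm
    · have h1 := (K1 (b ⟨i, hik⟩) ((ha_all _).trans (hab _).le)).1.mp le_rfl
      rw [hm (b ⟨i, hik⟩)] at h1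
      exact (K2 (b ⟨i, hik⟩) ((ha_all _).trans (hab _).le)).1.mpr h1
    · have h1 := (K2 (b' ⟨i, hil⟩) ((ha'_all _).trans (hab' _).le)).1.mp le_rfl
      rw [← hm (b' ⟨i, hil⟩)] at h1
      exact (K1 (b' ⟨i, hil⟩) ((ha'_all _).trans (hab' _).le)).1.mpr h1
end
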